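/- (Kaloujnine–Krasner) Let A, B, G be groups and suppose G is an extension of A by B: there is an injective homomorphism α : A → G and a surjective homomorphism π : G → B with image of α equal to the kernel of π. Then there exists an injective group homomorphism γ : G → A ≀ B into the complete wreath product; moreover γ can be chosen so that the composite of γ with the canonical projection A ≀ B → B equals π. -/

import Mathlib

/-- The complete (unrestricted regular) wreath product `N ≀ K`: the semidirect product
`(K → N) ⋊ K`, where `K → N` is the group of all functions under pointwise
multiplication and `k ∈ K` acts on `φ : K → N` by `(φ ^ k) y = φ (y * k⁻¹)`.
An element is written as a pair `k·φ` with multiplication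
`(k, φ) * (l, ψ) = (k * l, fun y => φ (y * l⁻¹) * ψ y)`. -/
structure WreathProduct (N K : Type u) [Group N] [Group K] : Type u where
  base : K
  fn : K → N

namespace WreathProduct

variable {N K : Type u} [Group N] [Group K]

instance : Mul (WreathProduct N K) :=
  ⟨fun w v => ⟨w.base * v.base, fun y => w.fn (y * v.base⁻¹) * v.fn y⟩⟩

instance : One (WreathProduct N K) := ⟨⟨1, fun _ => 1⟩⟩

instance : Inv (WreathProduct N K) :=
  ⟨fun w => ⟨w.base⁻¹, fun y => (w.fn (y * w.base))⁻¹⟩⟩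

@[simp] theorem mul_base (w v : WreathProduct N K) : (w * v).base = w.base * v.base := rfl
@[simp] theorem mul_fn (w v : WreathProduct N K) (y : K) :
    (w * v).fn y = w.fn (y * v.base⁻¹) * v.fn y := rfl
@[simp] theorem one_base : (1 : WreathProduct N K).base = 1 := rfl
@[simp] theorem one_fn (y : K) : (1 : WreathProduct N K).fn y = 1 := rfl
@[simp] theorem inv_base (w : WreathProduct N K) : w⁻¹.base = w.base⁻¹ := rfl
@[simp] theorem inv_fn (w : WreathProduct N K) (y : K) :
    w⁻¹.fn y = (w.fn (y * w.base))⁻¹ := rfl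

theorem ext' {w v : WreathProduct N K} (h1 : w.base = v.base)
    (h2 : ∀ y, w.fn y = v.fn y) : w = v := by
  cases w; cases v
  simp only [mk.injEq]
  exact ⟨h1, funext h2⟩

instance : Group (WreathProduct N K) where
  mul_assoc a b c := ext' (mul_assoc _ _ _) fun y => by
    simp [mul_inv_rev, mul_assoc]
  one_mul a := ext' (one_mul _) fun y => by simp
  mul_one a := ext' (mul_one _) fun y => by simp
  inv_mul_cancel a := ext' (inv_mul_cancel _) fun y => by simp

/-- The restricted wreath product `N wr K`, as the subgroup of the complete wreath
product consisting of elements whose function component has finite support. -/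
def restricted (N K : Type u) [Group N] [Group K] : Subgroup (WreathProduct N K) where
  carrier := {w | (Function.mulSupport w.fn).Finite}
  one_mem' := by
    simp [Function.mulSupport]
  mul_mem' := by
    intro a b ha hb
    refine Set.Finite.subset ?_ (Function.mulSupport_mul _ _)
    refine Set.Finite.union ?_ hb
    rw [show (fun y => a.fn (y * b.base⁻¹)) = a.fn ∘ (fun y => y * b.base⁻¹) from rfl,
      Function.mulSupport_comp_eq_preimage]
    exact ha.preimage (Set.injOn_of_injective (mul_left_injective _))
  inv_mem' := by
    intro a ha
    show (Function.mulSupport fun y => (a.fn (y * a.base))⁻¹).Finite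
    rw [show (Function.mulSupport fun y => (a.fn (y * a.base))⁻¹) =
        Function.mulSupport (fun y => a.fn (y * a.base))⁻¹ from rfl, Function.mulSupport_inv,
      show (fun y => a.fn (y * a.base)) = a.fn ∘ (fun y => y * a.base) from rfl,
      Function.mulSupport_comp_eq_preimage]
    exact ha.preimage (Set.injOn_of_injective (mul_left_injective _))

/-- The canonical projection from the complete wreath product `N ≀ K` onto `K`. -/
def proj (N K : Type u) [Group N] [Group K] : WreathProduct N K →* K where
  toFun := WreathProduct.base
  map_one' := rfl
  map_mul' _ _ := rfl

end WreathProduct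

/-- **Kaloujnine–Krasner**: if `G` is an extension of `A` by `B`, then `G` embeds into the
complete wreath product `A ≀ B`, compatibly with the canonical projection onto `B`. -/
theorem stmt1 (A B G : Type u) [Group A] [Group B] [Group G]
    (α : A →* G) (π : G →* B) (hα : Function.Injective α) (hπ : Function.Surjective π)
    (hrange : α.range = π.ker) :
    ∃ γ : G →* WreathProduct A B, Function.Injective γ ∧
      (WreathProduct.proj A B).comp γ = π := by
  classical
  -- a section of π
  let s : B → G := Function.surjInv hπ
  have hs : ∀ b, π (s b) = b := Function.surjInv_eq hπ
  let ainv : G → A := Function.invFun α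
  -- the function component
  let f : G → B → A := fun g y => ainv (s (y * (π g)⁻¹) * g * (s y)⁻¹)
  have hmem : ∀ (g : G) (y : B), ∃ a, α a = s (y * (π g)⁻¹) * g * (s y)⁻¹ := by
    intro g y
    have : s (y * (π g)⁻¹) * g * (s y)⁻¹ ∈ π.ker := by
      simp [MonoidHom.mem_ker, hs, mul_assoc]
    rw [← hrange] at this
    exact this
  have hf : ∀ (g : G) (y : B), α (f g y) = s (y * (π g)⁻¹) * g * (s y)⁻¹ := fun g y =>
    Function.invFun_eq (hmem g y)
  refine ⟨{ toFun := fun g => ⟨π g, f g⟩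
            map_one' := ?_
            map_mul' := ?_ }, ?_, ?_⟩
  · refine WreathProduct.ext' (by simp) fun y => ?_
    apply hα
    simp [hf]
  · intro g h
    refine WreathProduct.ext' (by simp) fun y => ?_
    apply hα
    simp only [map_mul, hf, WreathProduct.mul_fn]
    rw [mul_inv_rev, ← mul_assoc y]
    group
  · intro g h hgh
    have hb : π g = π h := congrArg WreathProduct.base hgh
    have hfn : f g 1 = f h 1 := congrArg (fun w => WreathProduct.fn w 1) hgh
    have := congrArg α hfn
    rw [hf, hf, hb] at this
    exact mul_left_cancel (mul_right_cancel this)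
  · rfl
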